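/- Let S be a cosimplicial complex and σ, τ ∈ S with σ ⊂ τ. Then cl(S) \ {σ, τ} is an elementary collapse of cl(S) if and only if S \ {σ, τ} is a reduction of S (i.e., δ(σ, S) = {τ} and the removal is valid). Moreover, (cl(S)\S) ∪ {σ, τ} is an elementary expansion of cl(S)\S if and only if S \ {σ, τ} is a coreduction of S (i.e., ∂(τ, S) = {σ}). -/

import Mathlib

open Finset

abbrev Simplex : Type := Finset ℕ
abbrev Cplx : Type := Finset (Finset ℕ)

/-- A simplicial complex: a finite set of nonempty finite sets closed under
taking nonempty subsets. -/
def IsSimpComplex (K : Cplx) : Prop :=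
  (∀ τ ∈ K, τ.Nonempty) ∧ ∀ τ ∈ K, ∀ σ : Simplex, σ ⊆ τ → σ.Nonempty → σ ∈ K

/-- A cosimplicial complex: for all σ, τ ∈ S, every ν with σ ⊆ ν ⊆ τ is in S. -/
def IsCosimplicial (S : Cplx) : Prop :=
  ∀ σ ∈ S, ∀ τ ∈ S, ∀ ν : Simplex, σ ⊆ ν → ν ⊆ τ → ν ∈ S

/-- S is open for K. -/
def IsOpenFor (K S : Cplx) : Prop :=
  S ⊆ K ∧ ∀ σ ∈ S, ∀ τ ∈ K, σ ⊆ τ → τ ∈ S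

/-- S is closed for K. -/
def IsClosedFor (K S : Cplx) : Prop :=
  S ⊆ K ∧ IsSimpComplex S

/-- Closure of a finite set of simplexes: all nonempty subsets of members. -/
def cl (S : Cplx) : Cplx :=
  S.biUnion fun τ => τ.powerset.filter fun σ => σ.Nonempty

/-- (σ, τ) is a free pair for K: τ is the only face of K properly containing σ. -/
def IsFreePair (K : Cplx) (σ τ : Simplex) : Prop :=
  σ ∈ K ∧ τ ∈ K ∧ σ ⊂ τ ∧ ∀ ρ ∈ K, σ ⊂ ρ → ρ = τ

/-- K' is an elementary expansion of K. -/
def ElemExpansion (K' K : Cplx) : Prop :=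
  ∃ σ τ : Simplex, σ ∉ K ∧ τ ∉ K ∧ K' = K ∪ {σ, τ} ∧ IsFreePair K' σ τ

/-- K' is an elementary filling of K: K' = K ∪ {ν} with ν a facet of K'. -/
def ElemFilling (K' K : Cplx) : Prop :=
  ∃ ν : Simplex, ν ∉ K ∧ K' = insert ν K ∧ ∀ ρ ∈ K', ν ⊆ ρ → ρ = ν

/-- A collapses onto B: a sequence of elementary collapses from A to B. -/
def Collapses (A B : Cplx) : Prop :=
  Relation.ReflTransGen (fun X Y : Cplx => ElemExpansion X Y) A B

/-- A Morse sequence from L to K, as W 0, …, W k, consisting of simplicial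
complexes, each step an elementary expansion or an elementary filling. -/
def MorseSeq (L K : Cplx) (k : ℕ) (W : ℕ → Cplx) : Prop :=
  W 0 = L ∧ W k = K ∧ (∀ i ≤ k, IsSimpComplex (W i)) ∧
  ∀ i < k, ElemExpansion (W (i+1)) (W i) ∨ ElemFilling (W (i+1)) (W i)

/-- F is a stack on S: monotone with respect to inclusion. -/
def IsStackOn (S : Cplx) (F : Simplex → ℤ) : Prop :=
  ∀ σ ∈ S, ∀ τ ∈ S, σ ⊆ τ → F σ ≤ F τ

/-- (σ, τ) is a regular pair of the Morse sequence W (of length k). -/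
def RegularPair (k : ℕ) (W : ℕ → Cplx) (σ τ : Simplex) : Prop :=
  ∃ i < k, σ ∉ W i ∧ τ ∉ W i ∧ W (i+1) = W i ∪ {σ, τ} ∧ IsFreePair (W (i+1)) σ τ

/-- An F-sequence: a Morse sequence whose regular pairs satisfy F σ = F τ. -/
def FSeq (F : Simplex → ℤ) (L K : Cplx) (k : ℕ) (W : ℕ → Cplx) : Prop :=
  MorseSeq L K k W ∧ ∀ σ τ : Simplex, RegularPair k W σ τ → F σ = F τ

/-- A flooding sequence: an F-sequence from ∅ to K such that F σ ≤ F τ whenever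
σ ∈ K_i and τ ∈ K_j appears strictly later (τ ∉ K_i), with i < j. -/
def Flooding (F : Simplex → ℤ) (K : Cplx) (k : ℕ) (W : ℕ → Cplx) : Prop :=
  FSeq F ∅ K k W ∧
  ∀ i j : ℕ, i < j → j ≤ k → ∀ σ ∈ W i, ∀ τ ∈ W j, τ ∉ W i → F σ ≤ F τ

/-- Coboundary δ(ν, S) of ν in S. -/

lemma mem_cl_iff {S : Cplx} {ν : Simplex} :
    ν ∈ cl S ↔ ν.Nonempty ∧ ∃ μ ∈ S, ν ⊆ μ := by
  simp only [cl, mem_biUnion, mem_filter, mem_powerset]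
  tauto

lemma open_cl {S : Cplx} (hcos : IsCosimplicial S) {ν ρ : Simplex}
    (hν : ν ∈ S) (hρ : ρ ∈ cl S) (hsub : ν ⊆ ρ) : ρ ∈ S := by
  obtain ⟨-, μ, hμ, hρμ⟩ := mem_cl_iff.mp hρ
  exact hcos ν hν μ hμ ρ hsub hρμ

def cob (S : Cplx) (ν : Simplex) : Cplx :=
  S.filter fun μ => ν ⊆ μ ∧ μ.card = ν.card + 1

/-- Boundary ∂(ν, S) of ν in S. -/
def bdry (S : Cplx) (ν : Simplex) : Cplx :=
  S.filter fun η => η ⊆ ν ∧ η.card + 1 = ν.card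

theorem collapse_iff_reduction_and_expansion_iff_coreduction
    (S : Cplx) (σ τ : Simplex) (hcos : IsCosimplicial S)
    (hne : ∀ ν ∈ S, ν.Nonempty)
    (hσ : σ ∈ S) (hτ : τ ∈ S) (hst : σ ⊂ τ) (hdim : τ.card = σ.card + 1) :
    (IsFreePair (cl S) σ τ ↔ cob S σ = {τ}) ∧
    ((IsSimpComplex ((cl S \ S) ∪ {σ, τ}) ∧ IsFreePair ((cl S \ S) ∪ {σ, τ}) σ τ) ↔
      bdry S τ = {σ}) := by

  have hσne : σ.Nonempty := hne σ hσ
  have hτne : τ.Nonempty := hne τ hτ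
  have hσcl : σ ∈ cl S := mem_cl_iff.mpr ⟨hσne, τ, hτ, hst.subset⟩
  have hτcl : τ ∈ cl S := mem_cl_iff.mpr ⟨hτne, τ, hτ, subset_rfl⟩
  constructor
  · constructor
    · rintro ⟨-, -, -, hfree⟩
      apply Finset.ext
      intro μ
      simp only [cob, mem_filter, mem_singleton]
      constructor
      · rintro ⟨hμS, hσμ, hcard⟩
        have hμcl : μ ∈ cl S := mem_cl_iff.mpr ⟨hne μ hμS, μ, hμS, subset_rfl⟩
        exact hfree μ hμcl (Finset.ssubset_iff_subset_ne.mpr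
          ⟨hσμ, fun h => by rw [h] at hcard; omega⟩)
      · rintro rfl
        exact ⟨hτ, hst.subset, hdim⟩
    · intro hcob
      refine ⟨hσcl, hτcl, hst, ?_⟩
      intro ρ hρ hσρ
      obtain ⟨hρne, μ, hμS, hρμ⟩ := mem_cl_iff.mp hρ
      have key : ∀ y ∈ ρ, y ∉ σ → insert y σ = τ := by
        intro y hy hyσ
        have hνS : insert y σ ∈ S :=
          hcos σ hσ μ hμS _ (Finset.subset_insert _ _)
            (Finset.insert_subset (hρμ hy) (hσρ.subset.trans hρμ))
        have : insert y σ ∈ cob S σ := by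
          simp only [cob, mem_filter]
          exact ⟨hνS, Finset.subset_insert _ _, Finset.card_insert_of_notMem hyσ⟩
        rw [hcob, mem_singleton] at this
        exact this
      obtain ⟨x, hxρ, hxσ⟩ := Finset.exists_of_ssubset hσρ
      apply Finset.Subset.antisymm
      · intro y hy
        by_cases hyσ : y ∈ σ
        · exact hst.subset hyσ
        · rw [← key y hy hyσ]; exact Finset.mem_insert_self _ _
      · rw [← key x hxρ hxσ]
        exact Finset.insert_subset hxρ hσρ.subset
  · -- part 2
    have hσT : σ ∈ (cl S \ S) ∪ {σ, τ} := by simp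
    have hτT : τ ∈ (cl S \ S) ∪ {σ, τ} := by simp
    constructor
    · rintro ⟨⟨-, hdown⟩, -⟩
      apply Finset.ext
      intro ν
      simp only [bdry, mem_filter, mem_singleton]
      constructor
      · rintro ⟨hνS, hντ, hcard⟩
        have hνT : ν ∈ (cl S \ S) ∪ {σ, τ} :=
          hdown τ hτT ν hντ (hne ν hνS)
        simp only [mem_union, mem_sdiff, mem_insert, mem_singleton] at hνT
        rcases hνT with ⟨-, hnS⟩ | rfl | rfl
        · exact absurd hνS hnS
        · rfl
        · omega
      · rintro rfl
        exact ⟨hσ, hst.subset, hdim.symm⟩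
    · intro hbdry
      -- key: every element of S contained in τ is σ or τ
      obtain ⟨t, htτ, htσ⟩ := Finset.exists_of_ssubset hst
      have keyA : ∀ η ∈ S, η ⊆ τ → η = σ ∨ η = τ := by
        intro η hηS hητ
        have step : ∀ η' ∈ S, η' ⊆ τ → η' ≠ τ → η' ⊆ σ := by
          intro η' hη'S hη'τ hne'
          have hlt : η'.card < τ.card :=
            Finset.card_lt_card (Finset.ssubset_iff_subset_ne.mpr ⟨hη'τ, hne'⟩)
          obtain ⟨ν, hη'ν, hντ, hνcard⟩ :=
            Finset.exists_subsuperset_card_eq (n := τ.card - 1) hη'τ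
              (by omega) (by omega)
          have hνc : ν.card = τ.card - 1 := by omega
          have hνS : ν ∈ S := hcos η' hη'S τ hτ ν hη'ν hντ
          have : ν ∈ bdry S τ := by
            simp only [bdry, mem_filter]
            refine ⟨hνS, hντ, ?_⟩
            omega
          rw [hbdry, mem_singleton] at this
          subst this
          exact hη'ν
        by_cases hητeq : η = τ
        · exact Or.inr hητeq
        have hησ : η ⊆ σ := step η hηS hητ hητeq
        by_cases hησeq : η = σ
        · exact Or.inl hησeq
        exfalso
        have hη' : insert t η ∈ S :=
          hcos η hηS τ hτ _ (Finset.subset_insert _ _)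
            (Finset.insert_subset htτ (hησ.trans hst.subset))
        have hη'τ : insert t η ⊆ τ :=
          Finset.insert_subset htτ (hησ.trans hst.subset)
        have hη'ne : insert t η ≠ τ := by
          intro h
          have hlt : η.card < σ.card :=
            Finset.card_lt_card (Finset.ssubset_iff_subset_ne.mpr ⟨hησ, hησeq⟩)
          have := Finset.card_insert_le t η
          have h2 : (insert t η).card = τ.card := by rw [h]
          omega
        have := step _ hη' hη'τ hη'ne
        exact htσ (this (Finset.mem_insert_self _ _))
      constructor
      · constructor
        · intro ν hν
          simp only [mem_union, mem_sdiff, mem_insert, mem_singleton] at hν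
          rcases hν with ⟨hcl, -⟩ | rfl | rfl
          · exact (mem_cl_iff.mp hcl).1
          · exact hσne
          · exact hτne
        · intro ν hν η hην hηne
          simp only [mem_union, mem_sdiff, mem_insert, mem_singleton] at hν ⊢
          rcases hν with ⟨hcl, hnS⟩ | h | h
          · left
            have hηcl : η ∈ cl S := by
              obtain ⟨-, μ, hμ, hsub⟩ := mem_cl_iff.mp hcl
              exact mem_cl_iff.mpr ⟨hηne, μ, hμ, hην.trans hsub⟩
            refine ⟨hηcl, fun hηS => hnS (open_cl hcos hηS hcl hην)⟩
          · -- η ⊆ σ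
            rw [h] at hην
            have hητ : η ⊆ τ := hην.trans hst.subset
            by_cases hηS : η ∈ S
            · rcases keyA η hηS hητ with h | h
              · exact Or.inr (Or.inl h)
              · exact Or.inr (Or.inr h)
            · left
              exact ⟨mem_cl_iff.mpr ⟨hηne, τ, hτ, hητ⟩, hηS⟩
          · rw [h] at hην
            by_cases hηS : η ∈ S
            · rcases keyA η hηS hην with h | h
              · exact Or.inr (Or.inl h)
              · exact Or.inr (Or.inr h)
            · left
              exact ⟨mem_cl_iff.mpr ⟨hηne, τ, hτ, hην⟩, hηS⟩
      · refine ⟨hσT, hτT, hst, ?_⟩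
        intro ρ hρ hσρ
        simp only [mem_union, mem_sdiff, mem_insert, mem_singleton] at hρ
        rcases hρ with ⟨hcl, hnS⟩ | rfl | rfl
        · exact absurd (open_cl hcos hσ hcl hσρ.subset) hnS
        · exact absurd hσρ (ssubset_irrefl _)
        · rfl
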